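/- With notation as in the definition of ≤_J (the J-nondegeneracy order), for any λ in the J-dominant chamber D_J = {μ : ⟨α̌_j, μ⟩ ≥ 0 ∀ j ∈ J}, the set {ν ∈ 𝔥* : ν ≤_J λ} is convex, and is a cone with vertex λ, i.e. closed under the maps ν ↦ λ + t(ν − λ) for all t ≥ 0. -/

import Mathlib

open Finset

/-- The `J`-nondegeneracy relation `ν ≤_J λ`. -/
def leJ {ι H : Type*} [Fintype ι] [AddCommGroup H] [Module ℝ H]
    (α : ι → H) (coroot : ι → (H →ₗ[ℝ] ℝ)) (J : Set ι) (ν lam : H) : Prop :=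
  ∃ kJ kC : ι → ℝ,
    (∀ i, 0 ≤ kJ i) ∧ (∀ i, 0 ≤ kC i) ∧
    (∀ i, i ∉ J → kJ i = 0) ∧ (∀ i, i ∈ J → kC i = 0) ∧
    lam - ν = (∑ i, kJ i • α i) + (∑ i, kC i • α i) ∧
    (∀ c, kJ c ≠ 0 →
      ∃ c', Relation.ReflTransGen
          (fun x y => kJ x ≠ 0 ∧ kJ y ≠ 0 ∧ x ≠ y ∧ coroot x (α y) ≠ 0) c c' ∧
        0 < coroot c' (lam - ∑ i, kC i • α i))

private lemma scalar_pos_aux {A S1 S2 a b : ℝ} (hA : 0 ≤ A) (hS1 : S1 ≤ 0) (hS2 : S2 ≤ 0)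
    (ha : 0 < a) (hb : 0 ≤ b) (h : 0 < A - S1) : 0 < A - (a * S1 + b * S2) := by
  have h1 : 0 ≤ -(a * S1) := by nlinarith
  have h2 : 0 ≤ -(b * S2) := by nlinarith
  rcases lt_or_ge 0 A with hA' | hA'
  · linarith
  · have hA0 : A = 0 := le_antisymm hA' hA
    have hS1' : S1 < 0 := by linarith
    have : 0 < a * (-S1) := mul_pos ha (by linarith)
    nlinarith

private lemma pair_nonpos_aux {ι H : Type*} [Fintype ι] [AddCommGroup H] [Module ℝ H]
    (α : ι → H) (coroot : ι → (H →ₗ[ℝ] ℝ)) (J : Set ι)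
    (hoff : ∀ i j, i ≠ j → coroot i (α j) ≤ 0)
    {m : ι → ℝ} (hm : ∀ i, 0 ≤ m i) (hmJ : ∀ i ∈ J, m i = 0)
    {c' : ι} (hc' : c' ∈ J) : coroot c' (∑ i, m i • α i) ≤ 0 := by
  rw [map_sum]
  apply Finset.sum_nonpos
  intro i _
  rw [map_smul, smul_eq_mul]
  by_cases h : i ∈ J
  · simp [hmJ i h]
  · exact mul_nonpos_of_nonneg_of_nonpos (hm i)
      (hoff c' i (fun e => h (e ▸ hc')))

private lemma leJ_combo_aux {ι H : Type*} [Fintype ι] [AddCommGroup H] [Module ℝ H]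
    (α : ι → H) (coroot : ι → (H →ₗ[ℝ] ℝ)) (J : Set ι)
    (hoff : ∀ i j, i ≠ j → coroot i (α j) ≤ 0)
    (lam : H) (hlam : ∀ j ∈ J, 0 ≤ coroot j lam)
    {a b : ℝ} (ha : 0 < a) (hb : 0 ≤ b)
    {k1 m1 m2 kk mm : ι → ℝ}
    (hm1 : ∀ i, 0 ≤ m1 i) (hm2 : ∀ i, 0 ≤ m2 i)
    (hk1J : ∀ i, i ∉ J → k1 i = 0)
    (hm1J : ∀ i ∈ J, m1 i = 0) (hm2J : ∀ i ∈ J, m2 i = 0)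
    (hkk : ∀ i, k1 i ≠ 0 → kk i ≠ 0)
    (hmm : ∀ i, mm i = a * m1 i + b * m2 i)
    (hcond : ∀ c, k1 c ≠ 0 →
      ∃ c', Relation.ReflTransGen
          (fun x y => k1 x ≠ 0 ∧ k1 y ≠ 0 ∧ x ≠ y ∧ coroot x (α y) ≠ 0) c c' ∧
        0 < coroot c' (lam - ∑ i, m1 i • α i))
    (c : ι) (hc : k1 c ≠ 0) :
    ∃ c', Relation.ReflTransGen
        (fun x y => kk x ≠ 0 ∧ kk y ≠ 0 ∧ x ≠ y ∧ coroot x (α y) ≠ 0) c c' ∧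
      0 < coroot c' (lam - ∑ i, mm i • α i) := by
  obtain ⟨c', hch, hpos⟩ := hcond c hc
  refine ⟨c', ?_, ?_⟩
  · exact Relation.ReflTransGen.mono
      (p := fun x y => kk x ≠ 0 ∧ kk y ≠ 0 ∧ x ≠ y ∧ coroot x (α y) ≠ 0)
      (fun x y h => ⟨hkk x h.1, hkk y h.2.1, h.2.2.1, h.2.2.2⟩) c c' hch
  · have hk1c' : k1 c' ≠ 0 := by
      induction hch with
      | refl => exact hc
      | tail _ h _ => exact h.2.1
    have hc'J : c' ∈ J := by
      by_contra h
      exact hk1c' (hk1J c' h)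
    have hA : 0 ≤ coroot c' lam := hlam c' hc'J
    have hS1 : coroot c' (∑ i, m1 i • α i) ≤ 0 :=
      pair_nonpos_aux α coroot J hoff hm1 hm1J hc'J
    have hS2 : coroot c' (∑ i, m2 i • α i) ≤ 0 :=
      pair_nonpos_aux α coroot J hoff hm2 hm2J hc'J
    have hsum : (∑ i, mm i • α i)
        = a • (∑ i, m1 i • α i) + b • (∑ i, m2 i • α i) := by
      simp_rw [hmm, add_smul, mul_smul, Finset.sum_add_distrib, Finset.smul_sum]
    rw [hsum, map_sub, map_add, map_smul, map_smul, smul_eq_mul, smul_eq_mul]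
    rw [map_sub] at hpos
    exact scalar_pos_aux hA hS1 hS2 ha hb hpos

/-- For `λ` in the `J`-dominant chamber, the set `{ν : ν ≤_J λ}` is convex and is a cone with
vertex `λ`, i.e. closed under `ν ↦ λ + t(ν - λ)` for all `t ≥ 0`. -/
theorem leJ_set_convex_cone {ι H : Type*} [Fintype ι] [AddCommGroup H] [Module ℝ H]
    (α : ι → H) (coroot : ι → (H →ₗ[ℝ] ℝ)) (J : Set ι)
    (hind : LinearIndependent ℝ α)
    (hdiag : ∀ i, coroot i (α i) = 2)
    (hoff : ∀ i j, i ≠ j → coroot i (α j) ≤ 0)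
    (hsym : ∀ i j, coroot i (α j) = 0 ↔ coroot j (α i) = 0)
    (lam : H) (hlam : ∀ j ∈ J, 0 ≤ coroot j lam) :
    Convex ℝ {ν : H | leJ α coroot J ν lam} ∧
    (∀ ν ∈ {ν : H | leJ α coroot J ν lam}, ∀ t : ℝ, 0 ≤ t →
      lam + t • (ν - lam) ∈ {ν : H | leJ α coroot J ν lam}) := by
  constructor
  · -- convexity
    intro ν₁ hν₁ ν₂ hν₂ a b ha hb hab
    obtain ⟨k1, m1, hk1, hm1, hk1J, hm1J, heq1, hcond1⟩ := hν₁
    obtain ⟨k2, m2, hk2, hm2, hk2J, hm2J, heq2, hcond2⟩ := hν₂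
    refine ⟨fun i => a * k1 i + b * k2 i, fun i => a * m1 i + b * m2 i,
      fun i => add_nonneg (mul_nonneg ha (hk1 i)) (mul_nonneg hb (hk2 i)),
      fun i => add_nonneg (mul_nonneg ha (hm1 i)) (mul_nonneg hb (hm2 i)), ?_, ?_, ?_, ?_⟩
    · intro i hi; show a * k1 i + b * k2 i = 0; rw [hk1J i hi, hk2J i hi]; ring
    · intro i hi; show a * m1 i + b * m2 i = 0; rw [hm1J i hi, hm2J i hi]; ring
    · have h1 : lam - (a • ν₁ + b • ν₂) = a • (lam - ν₁) + b • (lam - ν₂) := by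
        nth_rewrite 1 [show lam = a • lam + b • lam by rw [← add_smul, hab, one_smul]]
        rw [smul_sub, smul_sub]; abel
      rw [h1, heq1, heq2]
      simp_rw [add_smul, mul_smul, Finset.sum_add_distrib, smul_add, Finset.smul_sum]
      abel
    · intro c hc
      have hc' : a * k1 c + b * k2 c ≠ 0 := hc
      have hcase : a * k1 c ≠ 0 ∨ b * k2 c ≠ 0 := by
        by_contra h
        push_neg at h
        exact hc' (by rw [h.1, h.2]; ring)
      rcases hcase with h | h
      · have ha' : 0 < a := by
          rcases ha.lt_or_eq with h' | h'
          · exact h'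
          · exact absurd (by rw [← h', zero_mul]) h
        have hc1 : k1 c ≠ 0 := fun e => h (by rw [e, mul_zero])
        exact leJ_combo_aux α coroot J hoff lam hlam ha' hb hm1 hm2 hk1J hm1J hm2J
          (fun i hi => by
            show a * k1 i + b * k2 i ≠ 0
            have h1 : 0 < a * k1 i := mul_pos ha' ((hk1 i).lt_of_ne (Ne.symm hi))
            have h2 : 0 ≤ b * k2 i := mul_nonneg hb (hk2 i)
            exact ne_of_gt (by linarith))
          (fun i => rfl) hcond1 c hc1
      · have hb' : 0 < b := by
          rcases hb.lt_or_eq with h' | h'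
          · exact h'
          · exact absurd (by rw [← h', zero_mul]) h
        have hc2 : k2 c ≠ 0 := fun e => h (by rw [e, mul_zero])
        exact leJ_combo_aux α coroot J hoff lam hlam hb' ha hm2 hm1 hk2J hm2J hm1J
          (fun i hi => by
            show a * k1 i + b * k2 i ≠ 0
            have h1 : 0 < b * k2 i := mul_pos hb' ((hk2 i).lt_of_ne (Ne.symm hi))
            have h2 : 0 ≤ a * k1 i := mul_nonneg ha (hk1 i)
            exact ne_of_gt (by linarith))
          (fun i => by ring) hcond2 c hc2
  · -- cone
    intro ν hν t ht
    obtain ⟨k1, m1, hk1, hm1, hk1J, hm1J, heq1, hcond1⟩ := hν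
    rcases ht.lt_or_eq with ht' | ht'
    · refine ⟨fun i => t * k1 i, fun i => t * m1 i,
        fun i => mul_nonneg ht (hk1 i), fun i => mul_nonneg ht (hm1 i),
        fun i hi => by show t * k1 i = 0; rw [hk1J i hi, mul_zero],
        fun i hi => by show t * m1 i = 0; rw [hm1J i hi, mul_zero], ?_, ?_⟩
      · have h1 : lam - (lam + t • (ν - lam)) = t • (lam - ν) := by
          rw [smul_sub, smul_sub]; abel
        rw [h1, heq1]
        simp_rw [smul_add, Finset.smul_sum, smul_smul]
      · intro c hc
        have hc' : t * k1 c ≠ 0 := hc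
        have hc1 : k1 c ≠ 0 := fun e => hc' (by rw [e, mul_zero])
        exact leJ_combo_aux α coroot J hoff lam hlam ht' le_rfl hm1 hm1 hk1J hm1J hm1J
          (fun i hi => by
            show t * k1 i ≠ 0
            exact ne_of_gt (mul_pos ht' ((hk1 i).lt_of_ne (Ne.symm hi))))
          (fun i => by ring) hcond1 c hc1
    · refine ⟨0, 0, fun i => le_rfl, fun i => le_rfl, fun _ _ => rfl, fun _ _ => rfl, ?_, ?_⟩
      · simp [← ht']
      · intro c hc; simp at hc
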